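/- For every band M in L_p(μ), 1 ≤ p < ∞, there exists a locally disjoint decomposition μ = μ' + μ'' such that M = {f ∈ L_p(μ) : f = 0 μ''-a.e.} and M^⊥ = {f ∈ L_p(μ) : f = 0 μ'-a.e.}. Moreover μ' and μ'' can be chosen so that μ'(A) = μ''(A) = ∞ for all A ∈ 𝒜 that are not σ-finite. -/

import Mathlib

open MeasureTheory Set ENNReal

/-- Measures `μ'`, `μ''` dominated by `μ` are locally disjoint if every measurable set of
finite `μ`-measure splits into a disjoint measurable union of a `μ''`-null and a
`μ'`-null part. -/
def LocallyDisjoint {Ω : Type*} [MeasurableSpace Ω] (μ μ' μ'' : Measure Ω) : Prop :=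
  μ' ≤ μ ∧ μ'' ≤ μ ∧
  ∀ A : Set Ω, MeasurableSet A → μ A < ∞ →
    ∃ A' A'' : Set Ω, MeasurableSet A' ∧ MeasurableSet A'' ∧ A = A' ∪ A'' ∧
      Disjoint A' A'' ∧ μ' A'' = 0 ∧ μ'' A' = 0

/-- A band in `L_p(μ)`: a linear subspace which is a lattice ideal and closed under
suprema of arbitrary subsets (whenever the supremum exists). -/
def IsBand {Ω : Type*} [MeasurableSpace Ω] {μ : Measure Ω} {p : ℝ≥0∞} [Fact (1 ≤ p)]
    (M : Set (Lp ℝ p μ)) : Prop :=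
  (0 : Lp ℝ p μ) ∈ M ∧
  (∀ f ∈ M, ∀ g ∈ M, f + g ∈ M) ∧
  (∀ (c : ℝ), ∀ f ∈ M, c • f ∈ M) ∧
  (∀ f ∈ M, ∀ g : Lp ℝ p μ, |g| ≤ |f| → g ∈ M) ∧
  (∀ S : Set (Lp ℝ p μ), S ⊆ M → ∀ b : Lp ℝ p μ, IsLUB S b → b ∈ M)

set_option linter.unusedSectionVars false
set_option linter.unnecessarySimpa false
set_option maxHeartbeats 1000000

namespace BandDecomp
attribute [local instance] Classical.propDecidable


/-- sum of a directed supremum in `ℝ≥0∞` -/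
lemma tsum_iSup_directed {ι : Type*} (F : ℕ → ι → ℝ≥0∞)
    (hdir : ∀ a b : ι, ∃ c, ∀ i, F i a ≤ F i c ∧ F i b ≤ F i c) :
    (⨆ a, ∑' i, F i a) = ∑' i, ⨆ a, F i a := by
  refine le_antisymm (iSup_le fun a => ENNReal.tsum_le_tsum fun i => le_iSup (F i) a) ?_
  rw [ENNReal.tsum_eq_iSup_sum]
  refine iSup_le fun J => ?_
  have key : ∀ J : Finset ℕ, (∑ i ∈ J, ⨆ a, F i a) ≤ ⨆ a, ∑ i ∈ J, F i a := by
    intro J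
    induction J using Finset.induction with
    | empty => simp
    | @insert j J hj ih =>
      rw [Finset.sum_insert hj]
      calc (⨆ a, F j a) + ∑ i ∈ J, ⨆ a, F i a ≤ (⨆ a, F j a) + ⨆ a, ∑ i ∈ J, F i a := by
            exact add_le_add le_rfl ih
        _ = ⨆ a, (F j a + ∑ i ∈ J, F i a) := by
            refine ENNReal.iSup_add_iSup fun a b => ?_
            obtain ⟨c, hc⟩ := hdir a b
            exact ⟨c, add_le_add (hc j).1 (Finset.sum_le_sum fun i _ => (hc i).2)⟩
        _ = ⨆ a, ∑ i ∈ insert j J, F i a := by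
            simp [Finset.sum_insert hj]
  exact (key J).trans (iSup_mono fun a => ENNReal.sum_le_tsum J)

variable {Ω : Type*} [MeasurableSpace Ω]

/-- A set is `μ`-σ-finite if it admits a countable cover by measurable sets of finite
measure. -/
def SigCov (μ : Measure Ω) (A : Set Ω) : Prop :=
  ∃ s : ℕ → Set Ω, (∀ n, MeasurableSet (s n) ∧ μ (s n) < ∞) ∧ A ⊆ ⋃ n, s n

lemma SigCov.mono {μ : Measure Ω} {A B : Set Ω} (h : SigCov μ B) (hAB : A ⊆ B) :
    SigCov μ A := by
  obtain ⟨s, hs, hcov⟩ := h; exact ⟨s, hs, hAB.trans hcov⟩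

lemma sigCov_of_finite {μ : Measure Ω} {A : Set Ω} (hA : MeasurableSet A) (h : μ A < ∞) :
    SigCov μ A := ⟨fun _ => A, fun _ => ⟨hA, h⟩, subset_iUnion (fun _ : ℕ => A) 0⟩

lemma SigCov.iUnion {μ : Measure Ω} {A : ℕ → Set Ω} (h : ∀ n, SigCov μ (A n)) :
    SigCov μ (⋃ n, A n) := by
  choose s hs hcov using h
  refine ⟨fun n => s (Nat.unpair n).1 (Nat.unpair n).2, fun n => hs _ _, ?_⟩
  refine iUnion_subset fun n => (hcov n).trans ?_
  intro x hx
  simp only [mem_iUnion] at hx ⊢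
  obtain ⟨m, hm⟩ := hx
  exact ⟨Nat.pair n m, by simpa [Nat.unpair_pair] using hm⟩

/-- The measure which is `0` on σ-finite sets and `∞` on non-σ-finite sets. -/
noncomputable def sigmaInf (μ : Measure Ω) : Measure Ω :=
  Measure.ofMeasurable (fun A _ => if SigCov μ A then 0 else ∞)
    (by simp [sigCov_of_finite MeasurableSet.empty (by simp)])
    (by
      intro g hmeas hdis
      by_cases h : ∀ i, SigCov μ (g i)
      · rw [if_pos (SigCov.iUnion h)]
        have : ∀ i : ℕ, (if SigCov μ (g i) then (0:ℝ≥0∞) else ∞) = 0 := fun i => if_pos (h i)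
        simp only [this, tsum_zero]
      · push_neg at h
        obtain ⟨i, hi⟩ := h
        rw [if_neg (fun hc => hi (hc.mono (subset_iUnion g i)))]
        refine (top_le_iff.1 ?_).symm
        calc (∞ : ℝ≥0∞) = ite (SigCov μ (g i)) 0 ∞ := by rw [if_neg hi]
          _ ≤ ∑' i, ite (SigCov μ (g i)) 0 ∞ := ENNReal.le_tsum i)

lemma sigmaInf_apply (μ : Measure Ω) {A : Set Ω} (hA : MeasurableSet A) :
    sigmaInf μ A = if SigCov μ A then 0 else ∞ :=
  Measure.ofMeasurable_apply A hA

lemma sigmaInf_apply_of_sigCov (μ : Measure Ω) {A : Set Ω} (hA : MeasurableSet A)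
    (h : SigCov μ A) : sigmaInf μ A = 0 := by rw [sigmaInf_apply μ hA, if_pos h]

lemma sigmaInf_apply_of_not (μ : Measure Ω) {A : Set Ω} (hA : MeasurableSet A)
    (h : ¬ SigCov μ A) : sigmaInf μ A = ∞ := by rw [sigmaInf_apply μ hA, if_neg h]


variable {Ω : Type*} [MeasurableSpace Ω] {μ : Measure Ω} {p : ℝ≥0∞} [Fact (1 ≤ p)]

variable {Ω : Type*} [MeasurableSpace Ω] {μ : Measure Ω} {p : ℝ≥0∞} [Fact (1 ≤ p)]

/-- support of the (strongly measurable) chosen representative -/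
def spt (f : Lp ℝ p μ) : Set Ω := {x | f x ≠ 0}

lemma measurableSet_spt (f : Lp ℝ p μ) : MeasurableSet (spt f) :=
  ((Lp.stronglyMeasurable f).measurable (measurableSet_singleton 0)).compl

lemma spt_mem_ae (f : Lp ℝ p μ) : ∀ᵐ x ∂μ, (x ∈ spt f ↔ f x ≠ 0) :=
  Filter.Eventually.of_forall fun _ => Iff.rfl

/-- `|f| ⊓ |g| = 0` iff the supports are a.e. disjoint. -/
lemma inf_abs_eq_zero_iff (f g : Lp ℝ p μ) :
    |f| ⊓ |g| = 0 ↔ μ (spt f ∩ spt g) = 0 := by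
  have hco : ⇑(|f| ⊓ |g|) =ᵐ[μ] fun x => min |f x| |g x| := by
    filter_upwards [Lp.coeFn_inf |f| |g|, Lp.coeFn_abs f, Lp.coeFn_abs g] with x h1 h2 h3
    rw [h1, Pi.inf_apply, h2, h3]
  constructor
  · intro h
    have h0 : ⇑(|f| ⊓ |g|) =ᵐ[μ] (0 : Ω → ℝ) := by
      rw [h]; exact Lp.coeFn_zero ℝ p μ
    have : ∀ᵐ x ∂μ, ¬ (x ∈ spt f ∩ spt g) := by
      filter_upwards [hco, h0] with x h1 h2
      intro hx
      have hfx : f x ≠ 0 := hx.1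
      have hgx : g x ≠ 0 := hx.2
      have : min |f x| |g x| = 0 := by rw [← h1, h2]; rfl
      rcases min_eq_iff.1 this with h' | h' <;>
        [exact hfx (abs_eq_zero.1 h'.1); exact hgx (abs_eq_zero.1 h'.1)]
    exact measure_eq_zero_iff_ae_notMem.2 this
  · intro h
    refine Lp.ext (?_ : _ =ᵐ[μ] _)
    have hae : ∀ᵐ x ∂μ, ¬ (x ∈ spt f ∩ spt g) := measure_eq_zero_iff_ae_notMem.1 h
    filter_upwards [hco, hae, Lp.coeFn_zero ℝ p μ] with x h1 h2 h3
    rw [h1, h3]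
    by_cases hfx : f x = 0
    · simp [Pi.zero_apply, hfx, min_eq_iff, abs_nonneg]
    · have hgx : g x = 0 := by
        by_contra hgx; exact h2 ⟨hfx, hgx⟩
      simp [Pi.zero_apply, hgx, min_eq_iff, abs_nonneg]


lemma measure_inter_le_of_diff_null {A s t : Set Ω} (h : μ (s \ t) = 0) :
    μ (A ∩ s) ≤ μ (A ∩ t) := by
  calc μ (A ∩ s) ≤ μ ((A ∩ t) ∪ (s \ t)) := by
        refine measure_mono fun x hx => ?_
        by_cases hxt : x ∈ t
        · exact Or.inl ⟨hx.1, hxt⟩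
        · exact Or.inr ⟨hx.2, hxt⟩
    _ ≤ μ (A ∩ t) + μ (s \ t) := measure_union_le _ _
    _ = μ (A ∩ t) := by rw [h, add_zero]

/-- The measure `A ↦ ⨆ f ∈ N, μ (A ∩ spt f)` for a directed family `N`. -/
noncomputable def sptSup (μ : Measure Ω) (p : ℝ≥0∞) [Fact (1 ≤ p)] (N : Set (Lp ℝ p μ))
    (hdir : ∀ f ∈ N, ∀ g ∈ N, ∃ h ∈ N, μ (spt f \ spt h) = 0 ∧ μ (spt g \ spt h) = 0) :
    Measure Ω :=
  Measure.ofMeasurable (fun A _ => ⨆ f : N, μ (A ∩ spt f.1))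
    (by simp)
    (by
      intro g hmeas hdis
      have step : ∀ f : N, μ ((⋃ i, g i) ∩ spt f.1) = ∑' i, μ (g i ∩ spt f.1) := by
        intro f
        rw [iUnion_inter]
        exact measure_iUnion
          (hdis.mono fun i j hij => hij.mono inter_subset_left inter_subset_left)
          (fun i => (hmeas i).inter (measurableSet_spt f.1))
      simp only [step]
      exact tsum_iSup_directed (fun i (f : N) => μ (g i ∩ spt f.1)) (by
        rintro ⟨a, ha⟩ ⟨b, hb⟩
        obtain ⟨c, hc, h1, h2⟩ := hdir a ha b hb
        exact ⟨⟨c, hc⟩, fun i =>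
          ⟨measure_inter_le_of_diff_null h1, measure_inter_le_of_diff_null h2⟩⟩))

lemma sptSup_apply (μ : Measure Ω) (p : ℝ≥0∞) [Fact (1 ≤ p)] (N : Set (Lp ℝ p μ))
    (hdir : ∀ f ∈ N, ∀ g ∈ N, ∃ h ∈ N, μ (spt f \ spt h) = 0 ∧ μ (spt g \ spt h) = 0)
    {A : Set Ω} (hA : MeasurableSet A) :
    sptSup μ p N hdir A = ⨆ f : N, μ (A ∩ spt f.1) :=
  Measure.ofMeasurable_apply A hA


lemma spt_indicatorConstLp {s : Set Ω} (hs : MeasurableSet s) (hμs : μ s ≠ ∞) :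
    spt (indicatorConstLp p hs hμs (1 : ℝ)) =ᵐ[μ] s := by
  filter_upwards [indicatorConstLp_coeFn (p := p) (hs := hs) (hμs := hμs) (c := (1:ℝ))]
    with x hx
  show (x ∈ spt _) = (x ∈ s)
  simp only [spt, mem_setOf_eq, eq_iff_iff, hx]
  by_cases h : x ∈ s <;> simp [h]

lemma abs_mem {M : Set (Lp ℝ p μ)} (hM : IsBand M) {f : Lp ℝ p μ} (hf : f ∈ M) :
    |f| ∈ M := hM.2.2.2.1 f hf |f| (abs_abs f).le

/-- Local carrier: every finite-measure measurable set splits into a part which is (a.e.)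
the support of an element of `M`, maximal among supports of members of `M`, and a part
which is the support of an element of the orthogonal complement. -/
lemma local_carrier {M : Set (Lp ℝ p μ)} (hM : IsBand M)
    {A : Set Ω} (hA : MeasurableSet A) (hAfin : μ A < ∞) :
    ∃ U : Set Ω, MeasurableSet U ∧ U ⊆ A ∧
      (∃ b ∈ M, spt b =ᵐ[μ] U) ∧
      (∀ f ∈ M, μ ((A ∩ spt f) \ U) = 0) ∧
      (∃ b', (∀ f ∈ M, |b'| ⊓ |f| = (0 : Lp ℝ p μ)) ∧ spt b' =ᵐ[μ] (A \ U)) := by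
  classical
  set c : ℝ≥0∞ := ⨆ f : M, μ (A ∩ spt f.1) with hc
  have hcle : ∀ f ∈ M, μ (A ∩ spt f) ≤ c := fun f hf => le_iSup (fun g : M => μ (A ∩ spt g.1)) ⟨f, hf⟩
  have hcA : c ≤ μ A := iSup_le fun f => measure_mono inter_subset_left
  have hcfin : c ≠ ∞ := (hcA.trans_lt hAfin).ne
  -- choose an approximating sequence
  have hseq : ∀ n : ℕ, ∃ f : M, c ≤ μ (A ∩ spt f.1) + ((n : ℝ≥0∞) + 1)⁻¹ := by
    intro n
    by_cases hc0 : c ≤ ((n : ℝ≥0∞) + 1)⁻¹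
    · exact ⟨⟨0, hM.1⟩, hc0.trans (le_add_self)⟩
    · push_neg at hc0
      have hinv : ((n : ℝ≥0∞) + 1)⁻¹ ≠ 0 :=
        ENNReal.inv_ne_zero.2 (ENNReal.add_ne_top.2 ⟨ENNReal.natCast_ne_top n, one_ne_top⟩)
      have hinvtop : ((n : ℝ≥0∞) + 1)⁻¹ ≠ ∞ :=
        ENNReal.inv_ne_top.2 (fun h => one_ne_zero (add_eq_zero.1 h).2)
      have hc0' : c ≠ 0 := ((zero_le : (0:ℝ≥0∞) ≤ ((n : ℝ≥0∞) + 1)⁻¹).trans_lt hc0).ne'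
      have hlt : c - ((n : ℝ≥0∞) + 1)⁻¹ < c := ENNReal.sub_lt_self hcfin hc0' hinv
      rw [hc, lt_iSup_iff] at hlt
      obtain ⟨f, hf⟩ := hlt
      exact ⟨f, ((ENNReal.sub_lt_iff_lt_right hinvtop hc0.le).1 hf).le⟩
  choose fseq hfseq using hseq
  -- increasing sequence of members of `M` accumulating the supports
  set F : ℕ → Lp ℝ p μ :=
    fun n => Nat.rec |(fseq 0).1| (fun k Fk => Fk + |(fseq (k + 1)).1|) n with hF
  have hFsucc : ∀ n, F (n + 1) = F n + |(fseq (n + 1)).1| := fun n => rfl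
  have hFmem : ∀ n, F n ∈ M := by
    intro n
    induction n with
    | zero => exact abs_mem hM (fseq 0).2
    | succ k ih => exact hM.2.1 _ ih _ (abs_mem hM (fseq (k + 1)).2)
  have hFnonneg : ∀ n, ∀ᵐ x ∂μ, 0 ≤ F n x := by
    intro n
    induction n with
    | zero =>
      filter_upwards [Lp.coeFn_abs ((fseq 0).1 : Lp ℝ p μ)] with x hx
      rw [show F 0 = |(fseq 0).1| from rfl, hx]; exact abs_nonneg _
    | succ k ih =>
      filter_upwards [ih, Lp.coeFn_add (F k) |(fseq (k + 1)).1|,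
        Lp.coeFn_abs ((fseq (k + 1)).1 : Lp ℝ p μ)] with x h1 h2 h3
      rw [hFsucc k, h2]
      exact add_nonneg h1 (by rw [h3]; exact abs_nonneg _)
  have hFmono : ∀ᵐ x ∂μ, ∀ n m, n ≤ m → F n x ≤ F m x := by
    have step : ∀ᵐ x ∂μ, ∀ n, F n x ≤ F (n + 1) x := by
      rw [ae_all_iff]
      intro n
      filter_upwards [Lp.coeFn_add (F n) |(fseq (n + 1)).1|,
        Lp.coeFn_abs ((fseq (n + 1)).1 : Lp ℝ p μ)] with x h2 h3
      rw [hFsucc n, h2]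
      simpa [h3] using abs_nonneg ((fseq (n + 1)).1 x)
    filter_upwards [step] with x hx
    intro n m hnm
    induction m with
    | zero => simpa [Nat.le_zero.1 hnm]
    | succ k ih =>
      rcases Nat.lt_or_ge n (k + 1) with h | h
      · exact (ih (Nat.lt_succ_iff.1 h)).trans (hx k)
      · have : n = k + 1 := le_antisymm hnm h
        simp [this]
  have hFspt : ∀ n, ∀ᵐ x ∂μ, (fseq n).1 x ≠ 0 → F n x ≠ 0 := by
    intro n
    induction n with
    | zero =>
      filter_upwards [Lp.coeFn_abs ((fseq 0).1 : Lp ℝ p μ)] with x hx h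
      rw [show F 0 = |(fseq 0).1| from rfl, hx]
      simpa using h
    | succ k ih =>
      filter_upwards [hFnonneg k, Lp.coeFn_add (F k) |(fseq (k + 1)).1|,
        Lp.coeFn_abs ((fseq (k + 1)).1 : Lp ℝ p μ)] with x h1 h2 h3 h
      rw [hFsucc k, h2]
      have : 0 < |(fseq (k + 1)).1 x| := abs_pos.2 h
      have := add_pos_of_nonneg_of_pos h1 (h3 ▸ this)
      exact this.ne'
  -- the carrier set
  set U : Set Ω := A ∩ ⋃ n, spt (F n) with hUdef
  have hUmeas : MeasurableSet U := hA.inter (MeasurableSet.iUnion fun n => measurableSet_spt _)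
  have hUsub : U ⊆ A := inter_subset_left
  have hUfin : μ U < ∞ := (measure_mono hUsub).trans_lt hAfin
  -- the indicator of U as an element of M
  set b : Lp ℝ p μ := indicatorConstLp p hUmeas hUfin.ne (1 : ℝ) with hbdef
  have hbU : ⇑b =ᵐ[μ] U.indicator (fun _ => (1 : ℝ)) := indicatorConstLp_coeFn
  have hsptb : spt b =ᵐ[μ] U := spt_indicatorConstLp hUmeas hUfin.ne
  -- the auxiliary sequence in M whose LUB is b
  set oneA : Lp ℝ p μ := indicatorConstLp p hA hAfin.ne (1 : ℝ) with honeA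
  have hOA : ⇑oneA =ᵐ[μ] A.indicator (fun _ => (1 : ℝ)) := indicatorConstLp_coeFn
  set h : ℕ → Lp ℝ p μ := fun n => (((n : ℝ) + 1) • F n) ⊓ oneA with hhdef
  have hcoeh : ∀ n, ∀ᵐ x ∂μ, h n x = min (((n : ℝ) + 1) * F n x) (A.indicator (fun _ => (1:ℝ)) x) := by
    intro n
    filter_upwards [Lp.coeFn_inf (((n : ℝ) + 1) • F n) oneA,
      Lp.coeFn_smul ((n : ℝ) + 1) (F n), hOA] with x h1 h2 h3
    rw [hhdef]
    simp only [h1, Pi.inf_apply, h2, Pi.smul_apply, smul_eq_mul, h3, min_def]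
  have hmemh : ∀ n, h n ∈ M := by
    intro n
    refine hM.2.2.2.1 (((n : ℝ) + 1) • F n) (hM.2.2.1 _ _ (hFmem n)) _ ?_
    rw [← Lp.coeFn_le]
    filter_upwards [hcoeh n, Lp.coeFn_abs (h n), Lp.coeFn_abs (((n : ℝ) + 1) • F n),
      Lp.coeFn_smul ((n : ℝ) + 1) (F n), hFnonneg n] with x h1 h2 h3 h4 h5
    rw [h2, h3, h4]
    simp only [Pi.smul_apply, smul_eq_mul]
    have hnn : 0 ≤ ((n : ℝ) + 1) * F n x := by positivity
    have hind : (0:ℝ) ≤ A.indicator (fun _ => (1:ℝ)) x := Set.indicator_nonneg (by simp) x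
    rw [h1, abs_of_nonneg (le_min hnn hind)]
    exact (min_le_left _ _).trans (le_abs_self _)
  -- b is the LUB of the h n
  have hub : ∀ n, h n ≤ b := by
    intro n
    rw [← Lp.coeFn_le]
    filter_upwards [hcoeh n, hbU, hFnonneg n] with x h1 h2 h3
    rw [h1, h2]
    by_cases hxU : x ∈ U
    · have hxA : x ∈ A := hUsub hxU
      simp only [Set.indicator_of_mem hxU]
      exact (min_le_right _ _).trans (by simp [Set.indicator_of_mem hxA])
    · by_cases hxA : x ∈ A
      · -- x ∈ A but x ∉ U : then F n x = 0
        have hFx : F n x = 0 := by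
          by_contra hFx
          exact hxU ⟨hxA, mem_iUnion.2 ⟨n, hFx⟩⟩
        simp [hFx, Set.indicator_nonneg (fun _ _ => zero_le_one) x]
      · have hxU' : x ∉ U := fun hxU' => hxA (hUsub hxU')
        simp only [Set.indicator_of_notMem hxA, Set.indicator_of_notMem hxU']
        exact min_le_right _ _
  have hlub : IsLUB (Set.range h) b := by
    constructor
    · rintro u ⟨n, rfl⟩
      exact hub n
    · intro u hu
      have hun : ∀ n, ∀ᵐ x ∂μ, h n x ≤ u x := fun n => (Lp.coeFn_le _ _).2 (hu ⟨n, rfl⟩)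
      rw [← Lp.coeFn_le]
      have hcoeall : ∀ᵐ x ∂μ, ∀ n, h n x = min (((n : ℝ) + 1) * F n x)
          (A.indicator (fun _ => (1:ℝ)) x) := ae_all_iff.2 hcoeh
      have hunall : ∀ᵐ x ∂μ, ∀ n, h n x ≤ u x := ae_all_iff.2 hun
      have hnnall : ∀ᵐ x ∂μ, ∀ n, 0 ≤ F n x := ae_all_iff.2 hFnonneg
      filter_upwards [hbU, hcoeall, hunall, hFmono, hnnall] with x h1 h2 h3 h4 h5
      rw [h1]
      by_cases hxU : x ∈ U
      · obtain ⟨hxA, hxS⟩ := hxU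
        obtain ⟨n, hn⟩ := mem_iUnion.1 hxS
        have hFpos : 0 < F n x := lt_of_le_of_ne (h5 n) (Ne.symm hn)
        obtain ⟨k, hk⟩ := exists_nat_ge (1 / F n x)
        set m : ℕ := max n k with hm
        have h1m : (1:ℝ) ≤ ((m : ℝ) + 1) * F m x := by
          have hFm : F n x ≤ F m x := h4 n m (le_max_left _ _)
          have hk' : 1 / F n x ≤ (m : ℝ) + 1 := by
            refine hk.trans ?_
            have : (k : ℝ) ≤ (m : ℝ) := Nat.cast_le.2 (le_max_right n k)
            linarith
          calc (1:ℝ) = (1 / F n x) * F n x := by field_simp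
            _ ≤ ((m : ℝ) + 1) * F m x := by
                apply mul_le_mul hk' hFm hFpos.le
                positivity
        have hhm : h m x = 1 := by
          rw [h2 m, Set.indicator_of_mem hxA]
          exact inf_eq_right.2 (by linarith)
        calc Set.indicator U (fun _ => (1:ℝ)) x = 1 :=
              Set.indicator_of_mem (show x ∈ U from ⟨hxA, hxS⟩) _
          _ = h m x := hhm.symm
          _ ≤ u x := h3 m
      · rw [Set.indicator_of_notMem hxU]
        refine le_trans ?_ (h3 0)
        rw [h2 0]
        exact le_min (by simpa using h5 0) (Set.indicator_nonneg (fun _ _ => zero_le_one) x)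
  have hbM : b ∈ M := hM.2.2.2.2 (Set.range h) (Set.range_subset_iff.2 hmemh) b hlub
  -- μ U = c
  have hUc : μ U ≤ c := by
    have h1 : μ (A ∩ spt b) = μ (A ∩ U) :=
      measure_congr ((Filter.EventuallyEq.refl _ _).inter hsptb)
    have h2 : (A ∩ U : Set Ω) = U := inter_eq_self_of_subset_right hUsub
    have : μ U = μ (A ∩ spt b) := by rw [h1, h2]
    rw [this]
    exact hcle b hbM
  have hcU : c ≤ μ U := by
    refine ENNReal.le_of_forall_pos_le_add fun ε hε _ => ?_
    obtain ⟨n, hn⟩ := ENNReal.exists_inv_nat_lt (show (ε : ℝ≥0∞) ≠ 0 by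
      simpa using hε.ne')
    have hstep : μ (A ∩ spt ((fseq n).1 : Lp ℝ p μ)) ≤ μ U := by
      refine measure_mono_ae ?_
      filter_upwards [hFspt n] with x hx hmem
      exact ⟨hmem.1, mem_iUnion.2 ⟨n, hx hmem.2⟩⟩
    have hinvle : ((n : ℝ≥0∞) + 1)⁻¹ ≤ (ε : ℝ≥0∞) := by
      refine le_trans (ENNReal.inv_le_inv.2 ?_) hn.le
      exact le_self_add
    calc c ≤ μ (A ∩ spt ((fseq n).1 : Lp ℝ p μ)) + ((n : ℝ≥0∞) + 1)⁻¹ := hfseq n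
      _ ≤ μ U + ε := add_le_add hstep hinvle
  have hμU : μ U = c := le_antisymm hUc hcU
  -- maximality of U
  have hmax : ∀ f ∈ M, μ ((A ∩ spt f) \ U) = 0 := by
    intro f hf
    set g : Lp ℝ p μ := |f| + b with hg
    have hgM : g ∈ M := hM.2.1 _ (abs_mem hM hf) _ hbM
    have hincl : ∀ᵐ x ∂μ, x ∈ A ∩ (spt f ∪ U) → x ∈ A ∩ spt g := by
      filter_upwards [Lp.coeFn_add |f| b, Lp.coeFn_abs f, hbU] with x h1 h2 h3 hx
      refine ⟨hx.1, ?_⟩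
      have hgx : g x = |f x| + U.indicator (fun _ => (1:ℝ)) x := by
        rw [hg, h1]; simp [h2, h3]
      have hind : (0:ℝ) ≤ U.indicator (fun _ => (1:ℝ)) x :=
        Set.indicator_nonneg (fun _ _ => zero_le_one) x
      rcases hx.2 with hx' | hx'
      · have : 0 < |f x| := abs_pos.2 hx'
        show g x ≠ 0
        rw [hgx]; positivity
      · show g x ≠ 0
        rw [hgx, Set.indicator_of_mem hx']
        positivity
    have hA1 : μ (A ∩ (spt f ∪ U)) ≤ μ U := by
      calc μ (A ∩ (spt f ∪ U)) ≤ μ (A ∩ spt g) := measure_mono_ae hincl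
        _ ≤ c := hcle g hgM
        _ = μ U := hμU.symm
    have hsub2 : U ∪ ((A ∩ spt f) \ U) ⊆ A ∩ (spt f ∪ U) := by
      rintro x (hx | hx)
      · exact ⟨hUsub hx, Or.inr hx⟩
      · exact ⟨hx.1.1, Or.inl hx.1.2⟩
    have hdisj : Disjoint U ((A ∩ spt f) \ U) := disjoint_sdiff_right
    have hmeas2 : MeasurableSet ((A ∩ spt f) \ U) :=
      ((hA.inter (measurableSet_spt f)).diff hUmeas)
    have : μ U + μ ((A ∩ spt f) \ U) ≤ μ U := by
      rw [← measure_union hdisj hmeas2]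
      exact (measure_mono hsub2).trans hA1
    have := (ENNReal.add_le_add_iff_left hUfin.ne).1
      (by simpa using this : μ U + μ ((A ∩ spt f) \ U) ≤ μ U + 0)
    exact le_zero_iff.1 this
  -- the complementary indicator is in the orthogonal complement
  have hAUfin : μ (A \ U) < ∞ := (measure_mono diff_subset).trans_lt hAfin
  set b' : Lp ℝ p μ := indicatorConstLp p (hA.diff hUmeas) hAUfin.ne (1 : ℝ) with hb'
  have hsptb' : spt b' =ᵐ[μ] (A \ U) := spt_indicatorConstLp _ _
  have hb'perp : ∀ f ∈ M, |b'| ⊓ |f| = (0 : Lp ℝ p μ) := by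
    intro f hf
    rw [inf_abs_eq_zero_iff]
    have heq : (spt b' ∩ spt f : Set Ω) =ᵐ[μ] ((A ∩ spt f) \ U : Set Ω) := by
      exact (hsptb'.inter (Filter.EventuallyEq.refl _ (spt f))).trans
        (Filter.EventuallyEq.of_eq (show ((A \ U) ∩ spt f : Set Ω) = ((A ∩ spt f) \ U : Set Ω) by
          ext x; simp [mem_diff]; tauto))
    rw [measure_congr heq]
    exact hmax f hf
  exact ⟨U, hUmeas, hUsub, ⟨b, hbM, hsptb⟩, hmax, ⟨b', hb'perp, hsptb'⟩⟩


/-- If a.e. every point where `f` does not vanish lies in the support of one of countably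
many members of `M`, then `f ∈ M`. -/
lemma mem_of_ae_countable_carrier {M : Set (Lp ℝ p μ)} (hM : IsBand M)
    (f : Lp ℝ p μ) (b : ℕ → Lp ℝ p μ) (hb : ∀ n, b n ∈ M)
    (hcov : ∀ᵐ x ∂μ, f x ≠ 0 → ∃ n, b n x ≠ 0) : f ∈ M := by
  classical
  set B : ℕ → Lp ℝ p μ :=
    fun n => Nat.rec |b 0| (fun k Bk => Bk + |b (k + 1)|) n with hB
  have hBsucc : ∀ n, B (n + 1) = B n + |b (n + 1)| := fun n => rfl
  have hBmem : ∀ n, B n ∈ M := by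
    intro n
    induction n with
    | zero => exact abs_mem hM (hb 0)
    | succ k ih => exact hM.2.1 _ ih _ (abs_mem hM (hb (k + 1)))
  have hBnonneg : ∀ n, ∀ᵐ x ∂μ, 0 ≤ B n x := by
    intro n
    induction n with
    | zero =>
      filter_upwards [Lp.coeFn_abs (b 0)] with x hx
      rw [show B 0 = |b 0| from rfl, hx]; exact abs_nonneg _
    | succ k ih =>
      filter_upwards [ih, Lp.coeFn_add (B k) |b (k + 1)|, Lp.coeFn_abs (b (k + 1))]
        with x h1 h2 h3
      rw [hBsucc k, h2]
      exact add_nonneg h1 (by rw [h3]; exact abs_nonneg _)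
  have hBmono : ∀ᵐ x ∂μ, ∀ n m, n ≤ m → B n x ≤ B m x := by
    have step : ∀ᵐ x ∂μ, ∀ n, B n x ≤ B (n + 1) x := by
      rw [ae_all_iff]
      intro n
      filter_upwards [Lp.coeFn_add (B n) |b (n + 1)|, Lp.coeFn_abs (b (n + 1))] with x h2 h3
      rw [hBsucc n, h2]
      simpa [h3] using abs_nonneg (b (n + 1) x)
    filter_upwards [step] with x hx
    intro n m hnm
    induction m with
    | zero => simpa [Nat.le_zero.1 hnm]
    | succ k ih =>
      rcases Nat.lt_or_ge n (k + 1) with h | h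
      · exact (ih (Nat.lt_succ_iff.1 h)).trans (hx k)
      · have : n = k + 1 := le_antisymm hnm h
        simp [this]
  have hBspt : ∀ n, ∀ᵐ x ∂μ, b n x ≠ 0 → B n x ≠ 0 := by
    intro n
    induction n with
    | zero =>
      filter_upwards [Lp.coeFn_abs (b 0)] with x hx h
      rw [show B 0 = |b 0| from rfl, hx]
      simpa using h
    | succ k ih =>
      filter_upwards [hBnonneg k, Lp.coeFn_add (B k) |b (k + 1)|, Lp.coeFn_abs (b (k + 1))]
        with x h1 h2 h3 h
      rw [hBsucc k, h2]
      have habs : 0 < |b (k + 1) x| := abs_pos.2 h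
      exact (add_pos_of_nonneg_of_pos h1 (h3 ▸ habs)).ne'
  -- the approximating sequence in M
  set k : ℕ → Lp ℝ p μ := fun n => |f| ⊓ (((n : ℝ) + 1) • B n) with hk
  have hcoek : ∀ n, ∀ᵐ x ∂μ, k n x = min |f x| (((n : ℝ) + 1) * B n x) := by
    intro n
    filter_upwards [Lp.coeFn_inf |f| (((n : ℝ) + 1) • B n), Lp.coeFn_abs f,
      Lp.coeFn_smul ((n : ℝ) + 1) (B n)] with x h1 h2 h3
    rw [hk]
    simp only [h1, Pi.inf_apply, h2, h3, Pi.smul_apply, smul_eq_mul, min_def]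
  have hkmem : ∀ n, k n ∈ M := by
    intro n
    refine hM.2.2.2.1 (((n : ℝ) + 1) • B n) (hM.2.2.1 _ _ (hBmem n)) _ ?_
    rw [← Lp.coeFn_le]
    filter_upwards [hcoek n, Lp.coeFn_abs (k n), Lp.coeFn_abs (((n : ℝ) + 1) • B n),
      Lp.coeFn_smul ((n : ℝ) + 1) (B n), hBnonneg n] with x h1 h2 h3 h4 h5
    rw [h2, h3, h4]
    simp only [Pi.smul_apply, smul_eq_mul]
    have hnn : 0 ≤ ((n : ℝ) + 1) * B n x := by positivity
    rw [h1, abs_of_nonneg (le_min (abs_nonneg _) hnn)]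
    exact (min_le_right _ _).trans (le_abs_self _)
  have hub : ∀ n, k n ≤ |f| := by
    intro n
    rw [← Lp.coeFn_le]
    filter_upwards [hcoek n, Lp.coeFn_abs f] with x h1 h2
    rw [h1, h2]
    exact min_le_left _ _
  have hlub : IsLUB (Set.range k) |f| := by
    constructor
    · rintro u ⟨n, rfl⟩
      exact hub n
    · intro u hu
      have hun : ∀ᵐ x ∂μ, ∀ n, k n x ≤ u x :=
        ae_all_iff.2 fun n => (Lp.coeFn_le _ _).2 (hu ⟨n, rfl⟩)
      rw [← Lp.coeFn_le]
      have hcoeall : ∀ᵐ x ∂μ, ∀ n, k n x = min |f x| (((n : ℝ) + 1) * B n x) :=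
        ae_all_iff.2 hcoek
      have hnnall : ∀ᵐ x ∂μ, ∀ n, 0 ≤ B n x := ae_all_iff.2 hBnonneg
      have hsptall : ∀ᵐ x ∂μ, ∀ n, b n x ≠ 0 → B n x ≠ 0 := ae_all_iff.2 hBspt
      filter_upwards [Lp.coeFn_abs f, hcoeall, hun, hBmono, hnnall, hsptall, hcov]
        with x h1 h2 h3 h4 h5 h6 h7
      rw [h1]
      by_cases hfx : f x = 0
      · have := h3 0
        rw [h2 0] at this
        refine le_trans ?_ this
        simp only [hfx, abs_zero]
        exact le_min le_rfl (by have := h5 0; positivity)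
      · obtain ⟨n, hn⟩ := h7 hfx
        have hBpos : 0 < B n x := lt_of_le_of_ne (h5 n) (Ne.symm (h6 n hn))
        obtain ⟨j, hj⟩ := exists_nat_ge (|f x| / B n x)
        set m : ℕ := max n j with hm
        have hBm : B n x ≤ B m x := h4 n m (le_max_left _ _)
        have hjm : (j : ℝ) ≤ (m : ℝ) := Nat.cast_le.2 (le_max_right n j)
        have hge : |f x| ≤ ((m : ℝ) + 1) * B m x := by
          calc |f x| = (|f x| / B n x) * B n x := by field_simp
            _ ≤ ((m : ℝ) + 1) * B m x := by
                apply mul_le_mul (by linarith) hBm hBpos.le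
                positivity
        have : k m x = |f x| := by rw [h2 m]; exact min_eq_left hge
        calc |f x| = k m x := this.symm
          _ ≤ u x := h3 m
  have habs : |f| ∈ M := hM.2.2.2.2 (Set.range k) (Set.range_subset_iff.2 hkmem) |f| hlub
  exact hM.2.2.2.1 |f| habs f (le_of_eq (abs_abs f).symm)


lemma ae_spt_abs_add (f g : Lp ℝ p μ) :
    ∀ᵐ x ∂μ, ((|f| + |g|) x ≠ 0 ↔ (f x ≠ 0 ∨ g x ≠ 0)) := by
  filter_upwards [Lp.coeFn_add |f| |g|, Lp.coeFn_abs f, Lp.coeFn_abs g] with x h1 h2 h3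
  rw [h1]
  simp only [Pi.add_apply, h2, h3]
  constructor
  · intro h
    by_contra hc
    push_neg at hc
    simp [hc.1, hc.2] at h
  · intro h hc
    rcases h with h | h
    · have := abs_pos.2 h
      have := abs_nonneg (g x)
      linarith [hc]
    · have := abs_pos.2 h
      have := abs_nonneg (f x)
      linarith [hc]

/-- The orthogonal complement of `M`. -/
def perp (M : Set (Lp ℝ p μ)) : Set (Lp ℝ p μ) := {g | ∀ f ∈ M, |g| ⊓ |f| = 0}

lemma dir_band {M : Set (Lp ℝ p μ)} (hM : IsBand M) :
    ∀ f ∈ M, ∀ g ∈ M, ∃ h ∈ M, μ (spt f \ spt h) = 0 ∧ μ (spt g \ spt h) = 0 := by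
  intro f hf g hg
  refine ⟨|f| + |g|, hM.2.1 _ (abs_mem hM hf) _ (abs_mem hM hg), ?_, ?_⟩ <;>
  · refine measure_eq_zero_iff_ae_notMem.2 ?_
    filter_upwards [ae_spt_abs_add f g] with x hx h
    exact h.2 (hx.2 (by first | exact Or.inl h.1 | exact Or.inr h.1))

lemma mem_perp_iff {M : Set (Lp ℝ p μ)} {g : Lp ℝ p μ} :
    g ∈ perp M ↔ ∀ f ∈ M, μ (spt g ∩ spt f) = 0 := by
  constructor
  · intro hg f hf
    exact (inf_abs_eq_zero_iff g f).1 (hg f hf)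
  · intro hg f hf
    exact (inf_abs_eq_zero_iff g f).2 (hg f hf)

lemma dir_perp {M : Set (Lp ℝ p μ)} (hM : IsBand M) :
    ∀ f ∈ perp M, ∀ g ∈ perp M,
      ∃ h ∈ perp M, μ (spt f \ spt h) = 0 ∧ μ (spt g \ spt h) = 0 := by
  intro f hf g hg
  refine ⟨|f| + |g|, ?_, ?_, ?_⟩
  · rw [mem_perp_iff]
    intro k hk
    have h1 : μ (spt f ∩ spt k) = 0 := (mem_perp_iff.1 hf) k hk
    have h2 : μ (spt g ∩ spt k) = 0 := (mem_perp_iff.1 hg) k hk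
    refine le_zero_iff.1 ?_
    calc μ (spt (|f| + |g|) ∩ spt k)
        ≤ μ ((spt f ∩ spt k) ∪ (spt g ∩ spt k)) := by
          refine measure_mono_ae ?_
          filter_upwards [ae_spt_abs_add f g] with x hx h
          rcases hx.1 h.1 with h' | h'
          · exact Or.inl ⟨h', h.2⟩
          · exact Or.inr ⟨h', h.2⟩
      _ ≤ μ (spt f ∩ spt k) + μ (spt g ∩ spt k) := measure_union_le _ _
      _ = 0 := by rw [h1, h2, add_zero]
  all_goals
  · refine measure_eq_zero_iff_ae_notMem.2 ?_
    filter_upwards [ae_spt_abs_add f g] with x hx h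
    exact h.2 (hx.2 (by first | exact Or.inl h.1 | exact Or.inr h.1))

lemma sigCov_spt (hp' : p ≠ ∞) (f : Lp ℝ p μ) : SigCov μ (spt f) := by
  have hp0 : p ≠ 0 := (lt_of_lt_of_le zero_lt_one (Fact.out : 1 ≤ p)).ne'
  refine ⟨fun n => {x | ((n : ℝ≥0∞))⁻¹ ≤ (‖f x‖₊ : ℝ≥0∞)}, fun n => ⟨?_, ?_⟩, ?_⟩
  · exact measurableSet_le measurable_const (Lp.stronglyMeasurable f).measurable.nnnorm.coe_nnreal_ennreal
  · exact (Lp.memLp f).meas_ge_lt_top' hp0 hp'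
      (ENNReal.inv_ne_zero.2 (ENNReal.natCast_ne_top n))
  · intro x hx
    have hx' : f x ≠ 0 := hx
    have : (‖f x‖₊ : ℝ≥0∞) ≠ 0 := by simpa using hx'
    obtain ⟨n, hn⟩ := ENNReal.exists_inv_nat_lt this
    exact mem_iUnion.2 ⟨n, hn.le⟩

lemma key_carrier {M : Set (Lp ℝ p μ)} (hM : IsBand M)
    {A : Set Ω} (hA : MeasurableSet A) (hAfin : μ A < ∞) :
    ∃ U, MeasurableSet U ∧ U ⊆ A ∧
      (∃ b ∈ M, spt b =ᵐ[μ] U) ∧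
      (∃ b' ∈ perp M, spt b' =ᵐ[μ] (A \ U)) ∧
      sptSup μ p M (dir_band hM) A = μ U ∧
      sptSup μ p (perp M) (dir_perp hM) A = μ (A \ U) ∧
      (∀ f ∈ M, μ ((A ∩ spt f) \ U) = 0) ∧
      (∀ g ∈ perp M, μ (U ∩ spt g) = 0) := by
  obtain ⟨U, hUm, hUsub, ⟨b, hbM, hsptb⟩, hmax, ⟨b', hb'P, hsptb'⟩⟩ :=
    local_carrier hM hA hAfin
  have hb'mem : b' ∈ perp M := hb'P
  have hperpU : ∀ g ∈ perp M, μ (U ∩ spt g) = 0 := by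
    intro g hg
    have h0 : μ (spt g ∩ spt b) = 0 := mem_perp_iff.1 hg b hbM
    have : (U ∩ spt g : Set Ω) =ᵐ[μ] (spt b ∩ spt g : Set Ω) :=
      hsptb.symm.inter (Filter.EventuallyEq.refl _ _)
    rw [measure_congr this, inter_comm]
    exact h0
  refine ⟨U, hUm, hUsub, ⟨b, hbM, hsptb⟩, ⟨b', hb'mem, hsptb'⟩, ?_, ?_, hmax, hperpU⟩
  · rw [sptSup_apply μ p M (dir_band hM) hA]
    refine le_antisymm (iSup_le ?_) ?_
    · rintro ⟨f, hf⟩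
      calc μ (A ∩ spt f) ≤ μ ((A ∩ spt f) ∩ U) + μ ((A ∩ spt f) \ U) :=
            measure_le_inter_add_diff μ _ _
        _ = μ ((A ∩ spt f) ∩ U) := by rw [hmax f hf, add_zero]
        _ ≤ μ U := measure_mono inter_subset_right
    · have h1 : μ (A ∩ spt b) = μ (A ∩ U) :=
        measure_congr ((Filter.EventuallyEq.refl _ _).inter hsptb)
      have h2 : (A ∩ U : Set Ω) = U := inter_eq_self_of_subset_right hUsub
      have : μ U = μ (A ∩ spt ((⟨b, hbM⟩ : M) : Lp ℝ p μ)) := by rw [h1, h2]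
      rw [this]
      exact le_iSup (fun f : M => μ (A ∩ spt f.1)) ⟨b, hbM⟩
  · rw [sptSup_apply μ p (perp M) (dir_perp hM) hA]
    refine le_antisymm (iSup_le ?_) ?_
    · rintro ⟨g, hg⟩
      calc μ (A ∩ spt g) ≤ μ ((A ∩ spt g) ∩ U) + μ ((A ∩ spt g) \ U) :=
            measure_le_inter_add_diff μ _ _
        _ ≤ μ (U ∩ spt g) + μ (A \ U) := by
            refine add_le_add (measure_mono ?_) (measure_mono ?_)
            · exact fun x hx => ⟨hx.2, hx.1.2⟩
            · exact fun x hx => ⟨hx.1.1, hx.2⟩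
        _ = μ (A \ U) := by rw [hperpU g hg, zero_add]
    · have h1 : μ (A ∩ spt b') = μ (A ∩ (A \ U)) :=
        measure_congr ((Filter.EventuallyEq.refl _ _).inter hsptb')
      have h2 : (A ∩ (A \ U) : Set Ω) = A \ U := inter_eq_self_of_subset_right diff_subset
      have : μ (A \ U) = μ (A ∩ spt ((⟨b', hb'mem⟩ : perp M) : Lp ℝ p μ)) := by rw [h1, h2]
      rw [this]
      exact le_iSup (fun g : perp M => μ (A ∩ spt g.1)) ⟨b', hb'mem⟩

lemma ae_zero_iff_spt (m : Measure Ω) (f : Lp ℝ p μ) :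
    ((f : Ω → ℝ) =ᵐ[m] 0) ↔ m (spt f) = 0 := by
  rw [Filter.EventuallyEq, ae_iff]
  have : {x | ¬ f x = (0 : Ω → ℝ) x} = spt f := by
    ext x; simp [spt]
  rw [this]

end BandDecomp

open BandDecomp

theorem band_gives_locally_disjoint_decomposition {Ω : Type*} [MeasurableSpace Ω]
    (μ : Measure Ω) (p : ℝ≥0∞) [Fact (1 ≤ p)] (hp' : p ≠ ∞)
    (M : Set (Lp ℝ p μ)) (hM : IsBand M) :
    ∃ μ' μ'' : Measure Ω, μ = μ' + μ'' ∧ LocallyDisjoint μ μ' μ'' ∧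
      M = {f : Lp ℝ p μ | (f : Ω → ℝ) =ᵐ[μ''] 0} ∧
      {f : Lp ℝ p μ | ∀ g ∈ M, |f| ⊓ |g| = 0} = {f : Lp ℝ p μ | (f : Ω → ℝ) =ᵐ[μ'] 0} ∧
      ∀ A : Set Ω, MeasurableSet A →
        ¬(∃ s : ℕ → Set Ω, (∀ n, MeasurableSet (s n) ∧ μ (s n) < ∞) ∧ A ⊆ ⋃ n, s n) →
        μ' A = ∞ ∧ μ'' A = ∞ := by
  classical
  set ν : Measure Ω := sptSup μ p M (dir_band hM) with hν
  set ρ : Measure Ω := sptSup μ p (perp M) (dir_perp hM) with hρ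
  set σm : Measure Ω := sigmaInf μ with hσ
  have hσ0 : ∀ A : Set Ω, MeasurableSet A → μ A < ∞ → σm A = 0 := fun A hA h =>
    sigmaInf_apply_of_sigCov μ hA (sigCov_of_finite hA h)
  have hνle : ∀ A : Set Ω, MeasurableSet A → ν A ≤ μ A := by
    intro A hA
    rw [hν, sptSup_apply μ p M (dir_band hM) hA]
    exact iSup_le fun f => measure_mono inter_subset_left
  have hρle : ∀ A : Set Ω, MeasurableSet A → ρ A ≤ μ A := by
    intro A hA
    rw [hρ, sptSup_apply μ p (perp M) (dir_perp hM) hA]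
    exact iSup_le fun f => measure_mono inter_subset_left
  refine ⟨ν + σm, ρ + σm, ?_, ⟨?_, ?_, ?_⟩, ?_, ?_, ?_⟩
  -- μ = μ' + μ''
  · refine Measure.ext fun A hA => ?_
    rw [Measure.add_apply, Measure.add_apply, Measure.add_apply]
    by_cases hcov : SigCov μ A
    · have hσA : σm A = 0 := sigmaInf_apply_of_sigCov μ hA hcov
      rw [hσA, add_zero, add_zero]
      obtain ⟨s, hs, hsub⟩ := hcov
      set t : ℕ → Set Ω := fun n => A ∩ disjointed s n with ht
      have htm : ∀ n, MeasurableSet (t n) := fun n =>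
        hA.inter (MeasurableSet.disjointed (fun i => (hs i).1) n)
      have htfin : ∀ n, μ (t n) < ∞ := fun n =>
        ((measure_mono (inter_subset_right.trans (disjointed_subset s n))).trans_lt (hs n).2)
      have htdis : Pairwise (Function.onFun Disjoint t) :=
        (disjoint_disjointed s).mono fun i j h =>
          h.mono inter_subset_right inter_subset_right
      have htU : ⋃ n, t n = A := by
        rw [ht, ← inter_iUnion, iUnion_disjointed]
        exact inter_eq_self_of_subset_left hsub
      have piece : ∀ n, μ (t n) = ν (t n) + ρ (t n) := by
        intro n
        obtain ⟨U, hUm, hUsub, -, -, hνeq, hρeq, -, -⟩ := key_carrier hM (htm n) (htfin n)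
        rw [hν, hρ, hνeq, hρeq, ← measure_union disjoint_sdiff_right ((htm n).diff hUm),
          union_diff_cancel hUsub]
      calc μ A = μ (⋃ n, t n) := by rw [htU]
        _ = ∑' n, μ (t n) := measure_iUnion htdis htm
        _ = ∑' n, (ν (t n) + ρ (t n)) := tsum_congr piece
        _ = (∑' n, ν (t n)) + ∑' n, ρ (t n) := ENNReal.tsum_add
        _ = ν (⋃ n, t n) + ρ (⋃ n, t n) := by
            rw [measure_iUnion htdis htm, measure_iUnion htdis htm]
        _ = ν A + ρ A := by rw [htU]
    · have hμA : μ A = ∞ := by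
        by_contra h
        exact hcov (sigCov_of_finite hA (lt_top_iff_ne_top.2 h))
      rw [sigmaInf_apply_of_not μ hA hcov, hμA]
      simp
  -- μ' ≤ μ
  · refine Measure.le_iff.2 fun A hA => ?_
    rw [Measure.add_apply]
    by_cases h : μ A < ∞
    · rw [hσ0 A hA h, add_zero]; exact hνle A hA
    · rw [not_lt, top_le_iff] at h; rw [h]; exact le_top
  -- μ'' ≤ μ
  · refine Measure.le_iff.2 fun A hA => ?_
    rw [Measure.add_apply]
    by_cases h : μ A < ∞
    · rw [hσ0 A hA h, add_zero]; exact hρle A hA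
    · rw [not_lt, top_le_iff] at h; rw [h]; exact le_top
  -- local disjointness
  · intro A hA hAfin
    obtain ⟨U, hUm, hUsub, -, -, -, -, hmax, hperpU⟩ := key_carrier hM hA hAfin
    refine ⟨U, A \ U, hUm, hA.diff hUm, (union_diff_cancel hUsub).symm,
      disjoint_sdiff_right, ?_, ?_⟩
    · rw [Measure.add_apply]
      have h1 : ν (A \ U) = 0 := by
        rw [hν, sptSup_apply μ p M (dir_band hM) (hA.diff hUm)]
        refine le_zero_iff.1 (iSup_le ?_)
        rintro ⟨f, hf⟩
        refine le_trans (measure_mono ?_) (le_of_eq (hmax f hf))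
        exact fun x hx => ⟨⟨hx.1.1, hx.2⟩, hx.1.2⟩
      have h2 : σm (A \ U) = 0 :=
        hσ0 _ (hA.diff hUm) ((measure_mono diff_subset).trans_lt hAfin)
      rw [h1, h2, add_zero]
    · rw [Measure.add_apply]
      have h1 : ρ U = 0 := by
        rw [hρ, sptSup_apply μ p (perp M) (dir_perp hM) hUm]
        refine le_zero_iff.1 (iSup_le ?_)
        rintro ⟨g, hg⟩
        exact le_of_eq (hperpU g hg)
      have h2 : σm U = 0 := hσ0 _ hUm ((measure_mono hUsub).trans_lt hAfin)
      rw [h1, h2, add_zero]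
  -- M = {f | f =ᵐ[μ''] 0}
  · ext f
    simp only [Set.mem_setOf_eq]
    rw [ae_zero_iff_spt (ρ + σm) f, Measure.add_apply]
    constructor
    · intro hf
      have h1 : ρ (spt f) = 0 := by
        rw [hρ, sptSup_apply μ p (perp M) (dir_perp hM) (measurableSet_spt f)]
        refine le_zero_iff.1 (iSup_le ?_)
        rintro ⟨g, hg⟩
        refine le_of_eq ?_
        rw [inter_comm]
        exact mem_perp_iff.1 hg f hf
      have h2 : σm (spt f) = 0 :=
        sigmaInf_apply_of_sigCov μ (measurableSet_spt f) (sigCov_spt hp' f)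
      rw [h1, h2, add_zero]
    · intro hf
      have h1 : ρ (spt f) = 0 := by
        
        have := add_eq_zero.1 hf
        exact this.1
      have h2 : σm (spt f) = 0 := (add_eq_zero.1 hf).2
      have hcovs : SigCov μ (spt f) := by
        by_contra hc
        rw [hσ, sigmaInf_apply_of_not μ (measurableSet_spt f) hc] at h2
        exact top_ne_zero h2
      have hallg : ∀ g ∈ perp M, μ (spt f ∩ spt g) = 0 := by
        intro g hg
        refine le_zero_iff.1 ?_
        rw [hρ, sptSup_apply μ p (perp M) (dir_perp hM) (measurableSet_spt f)] at h1
        calc μ (spt f ∩ spt g) ≤ ⨆ g : perp M, μ (spt f ∩ spt g.1) :=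
              le_iSup (fun g : perp M => μ (spt f ∩ spt g.1)) ⟨g, hg⟩
          _ = 0 := h1
      obtain ⟨s, hs, hsub⟩ := hcovs
      set t : ℕ → Set Ω := fun n => spt f ∩ disjointed s n with ht
      have htm : ∀ n, MeasurableSet (t n) := fun n =>
        (measurableSet_spt f).inter (MeasurableSet.disjointed (fun i => (hs i).1) n)
      have htfin : ∀ n, μ (t n) < ∞ := fun n =>
        ((measure_mono (inter_subset_right.trans (disjointed_subset s n))).trans_lt (hs n).2)
      have htU : ⋃ n, t n = spt f := by
        rw [ht, ← inter_iUnion, iUnion_disjointed]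
        exact inter_eq_self_of_subset_left hsub
      have hkey := fun n => key_carrier hM (htm n) (htfin n)
      choose U hUm hUsub hb hb' hνeq hρeq hmaxU hperpU using hkey
      choose b hbM hsptb using hb
      choose b' hb'P hsptb' using hb'
      have htnull : ∀ n, μ (t n \ U n) = 0 := by
        intro n
        have h3 : μ (spt f ∩ spt (b' n)) = 0 := hallg (b' n) (hb'P n)
        have h4 : (spt f ∩ (t n \ U n) : Set Ω) =ᵐ[μ] (spt f ∩ spt (b' n) : Set Ω) :=
          (Filter.EventuallyEq.refl _ _).inter (hsptb' n).symm
        have h5 : (spt f ∩ (t n \ U n) : Set Ω) = t n \ U n :=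
          inter_eq_self_of_subset_right (diff_subset.trans inter_subset_left)
        rw [← h5, measure_congr h4]
        exact h3
      refine mem_of_ae_countable_carrier hM f b hbM ?_
      have hae1 : ∀ᵐ x ∂μ, ∀ n, x ∉ t n \ U n :=
        ae_all_iff.2 fun n => measure_eq_zero_iff_ae_notMem.1 (htnull n)
      have hae2 : ∀ᵐ x ∂μ, ∀ n, (x ∈ spt (b n) ↔ x ∈ U n) :=
        ae_all_iff.2 fun n => Filter.eventuallyEq_set.1 (hsptb n)
      filter_upwards [hae1, hae2] with x hx1 hx2 hfx
      have hxspt : x ∈ spt f := hfx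
      have : x ∈ ⋃ n, t n := htU ▸ hxspt
      obtain ⟨n, hn⟩ := mem_iUnion.1 this
      have hxU : x ∈ U n := by
        by_contra hc
        exact hx1 n ⟨hn, hc⟩
      exact ⟨n, (hx2 n).2 hxU⟩
  -- perp = {f | f =ᵐ[μ'] 0}
  · ext g
    simp only [Set.mem_setOf_eq]
    rw [ae_zero_iff_spt (ν + σm) g, Measure.add_apply]
    constructor
    · intro hg
      have h1 : ν (spt g) = 0 := by
        rw [hν, sptSup_apply μ p M (dir_band hM) (measurableSet_spt g)]
        refine le_zero_iff.1 (iSup_le ?_)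
        rintro ⟨f, hf⟩
        exact le_of_eq ((inf_abs_eq_zero_iff g f).1 (hg f hf))
      have h2 : σm (spt g) = 0 :=
        sigmaInf_apply_of_sigCov μ (measurableSet_spt g) (sigCov_spt hp' g)
      rw [h1, h2, add_zero]
    · intro hg f hf
      have h1 : ν (spt g) = 0 := (add_eq_zero.1 hg).1
      rw [hν, sptSup_apply μ p M (dir_band hM) (measurableSet_spt g)] at h1
      refine (inf_abs_eq_zero_iff g f).2 (le_zero_iff.1 ?_)
      calc μ (spt g ∩ spt f) ≤ ⨆ f : M, μ (spt g ∩ spt f.1) :=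
            le_iSup (fun f : M => μ (spt g ∩ spt f.1)) ⟨f, hf⟩
        _ = 0 := h1
  -- infinite on non-σ-finite sets
  · intro A hA hnc
    have hnc' : ¬ SigCov μ A := hnc
    have hσA : σm A = ∞ := sigmaInf_apply_of_not μ hA hnc'
    constructor <;> (rw [Measure.add_apply, hσA]; simp)
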